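/- For every integer k ≥ 1 and all n, q ≥ 0, L_k^q(n) = Σ_{p ∈ D_k(n)} A_{k, p+q}, and moreover the canonical k-decomposition of L_k^q(n) is the shifted set {p + q : p ∈ D_k(n)}. -/
import Mathlib


/-- Fuel-limited version of Hofstadter's recursion:
`Fa k fuel n` equals `F_k n` whenever `fuel ≥ n`. -/
def Fa (k : ℕ) : ℕ → ℕ → ℕ
  | 0, _ => 0
  | _ + 1, 0 => 0
  | fuel + 1, n + 1 => (n + 1) - (Fa k fuel)^[k] n

/-- Hofstadter's function `F_k` : `F k 0 = 0` and `F k n = n - (F k)^[k] (n-1)`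
for `n ≥ 1` (since `F_k m ≤ m`, the fuel `n` is always sufficient). -/
def F (k : ℕ) (n : ℕ) : ℕ := Fa k n n

/-- The function `L_k n = n + (F k)^[k-1] n`. -/
def L (k : ℕ) (n : ℕ) : ℕ := n + (F k)^[k - 1] n

/-- The Fibonacci-like sequence `A_{k,p}` : `A k p = p+1` for `p < k`,
and `A k p = A k (p-1) + A k (p-k)` for `p ≥ k`.
(The `max k 1` only makes termination evident; in all statements `k ≥ 1`.) -/
def A (k : ℕ) : ℕ → ℕ
  | 0 => 1
  | p + 1 => if p + 1 < k then p + 2 else A k p + A k (p + 1 - max k 1)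
termination_by p => p
decreasing_by all_goals omega

/-- `D` is a canonical `k`-decomposition of `n` : distinct elements are at
distance at least `k`, and the corresponding `A`-numbers sum to `n`. -/
def IsCanonDecomp (k n : ℕ) (D : Finset ℕ) : Prop :=
  (∀ p ∈ D, ∀ q ∈ D, p ≠ q → k ≤ Nat.dist p q) ∧ ∑ p ∈ D, A k p = n


section Basic
variable {k : ℕ} (hk : 1 ≤ k)

lemma A_zero : A k 0 = 1 := by rw [A]

lemma A_of_lt {p : ℕ} (h : p < k) : A k p = p + 1 := by
  cases p with
  | zero => rw [A]
  | succ m => rw [A, if_pos h]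

include hk in
lemma A_rec {p : ℕ} (h : k ≤ p + 1) : A k (p + 1) = A k p + A k (p + 1 - k) := by
  rw [A, if_neg (by omega)]
  congr 2
  omega

lemma A_pos (p : ℕ) : 1 ≤ A k p := by
  induction p using Nat.strong_induction_on with
  | _ p ih =>
    cases p with
    | zero => simp [A_zero]
    | succ m =>
      rw [A]
      split
      · omega
      · have := ih m (by omega)
        omega

include hk in
lemma A_lt_succ (p : ℕ) : A k p < A k (p + 1) := by
  by_cases h : p + 1 < k
  · rw [A_of_lt h, A_of_lt (by omega)]; omega
  · rw [A_rec hk (by omega)]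
    have := A_pos (k := k) (p + 1 - k)
    omega

include hk in
lemma A_strictMono : StrictMono (A k) :=
  strictMono_nat_of_lt_succ (A_lt_succ hk)

include hk in
lemma A_one : A k 1 = 2 := by
  by_cases h : 1 < k
  · rw [A_of_lt h]
  · have hk1 : k = 1 := by omega
    subst hk1
    rw [A_rec (le_refl 1) (by omega)]
    simp [A_zero]

include hk in
lemma two_le_A {p : ℕ} (hp : 1 ≤ p) : 2 ≤ A k p := by
  have := A_one hk
  rcases Nat.eq_or_lt_of_le hp with h | h
  · rw [← h]; omega
  · have h2 : A k 1 < A k p := A_strictMono hk h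
    omega

end Basic

section Fbasic

lemma Fa_zero (k fuel : ℕ) : Fa k fuel 0 = 0 := by
  cases fuel <;> rfl

lemma F_zero (k : ℕ) : F k 0 = 0 := rfl

lemma F_props (k : ℕ) (n : ℕ) :
    (∀ fuel, n ≤ fuel → Fa k fuel n = F k n) ∧ F k n ≤ n ∧ (1 ≤ n → 1 ≤ F k n) := by
  induction n using Nat.strong_induction_on with
  | _ n ih =>
    cases n with
    | zero =>
      refine ⟨fun fuel _ => ?_, le_refl _, by omega⟩
      rw [Fa_zero, F_zero]
    | succ m =>
      have hiter_le : ∀ i, (F k)^[i] m ≤ m := by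
        intro i
        induction i with
        | zero => simp
        | succ i ihi =>
          rw [Function.iterate_succ_apply']
          exact le_trans ((ih _ (by omega)).2.1) ihi
      have hiter_pos : 1 ≤ m → ∀ i, 1 ≤ (F k)^[i] m := by
        intro hm i
        induction i with
        | zero => simpa
        | succ i ihi =>
          rw [Function.iterate_succ_apply']
          exact (ih _ (by have := hiter_le i; omega)).2.2 ihi
      have hfa_iter : ∀ fuel, m ≤ fuel → ∀ i, (Fa k fuel)^[i] m = (F k)^[i] m := by
        intro fuel hf i
        induction i with
        | zero => rfl
        | succ i ihi =>
          rw [Function.iterate_succ_apply', Function.iterate_succ_apply', ihi]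
          exact (ih _ (by have := hiter_le i; omega)).1 fuel
            (le_trans (hiter_le i) hf)
      have hstab : ∀ fuel, m + 1 ≤ fuel → Fa k fuel (m + 1) = F k (m + 1) := by
        intro fuel hf
        obtain ⟨f, rfl⟩ : ∃ f, fuel = f + 1 := ⟨fuel - 1, by omega⟩
        show (m + 1) - (Fa k f)^[k] m = F k (m + 1)
        rw [hfa_iter f (by omega) k]
        show _ = Fa k (m + 1) (m + 1)
        rw [show Fa k (m + 1) (m + 1) = (m + 1) - (Fa k m)^[k] m from rfl,
          hfa_iter m (le_refl m) k]
      have hform : F k (m + 1) = (m + 1) - (F k)^[k] m := by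
        rw [← hstab (m + 1) (le_refl _)]
        show (m + 1) - (Fa k m)^[k] m = _
        rw [hfa_iter m (le_refl m) k]
      refine ⟨hstab, ?_, ?_⟩
      · rw [hform]; omega
      · intro _
        rw [hform]
        cases Nat.eq_zero_or_pos m with
        | inl h =>
          subst h
          simp [Function.iterate_fixed (F_zero k)]
        | inr h =>
          have h1 := hiter_pos h k
          have h2 := hiter_le k
          omega

lemma Fa_eq {k fuel n : ℕ} (h : n ≤ fuel) : Fa k fuel n = F k n :=
  (F_props k n).1 fuel h

lemma F_le (k n : ℕ) : F k n ≤ n := (F_props k n).2.1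

lemma F_pos {k n : ℕ} (h : 1 ≤ n) : 1 ≤ F k n := (F_props k n).2.2 h

lemma F_iter_le (k i n : ℕ) : (F k)^[i] n ≤ n := by
  induction i with
  | zero => simp
  | succ i ihi =>
    rw [Function.iterate_succ_apply']
    exact le_trans (F_le k _) ihi

lemma F_iter_pos {k n : ℕ} (h : 1 ≤ n) (i : ℕ) : 1 ≤ (F k)^[i] n := by
  induction i with
  | zero => simpa
  | succ i ihi =>
    rw [Function.iterate_succ_apply']
    exact F_pos ihi

lemma Fa_iter_eq {k fuel n : ℕ} (h : n ≤ fuel) (i : ℕ) :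
    (Fa k fuel)^[i] n = (F k)^[i] n := by
  induction i with
  | zero => rfl
  | succ i ihi =>
    rw [Function.iterate_succ_apply', Function.iterate_succ_apply', ihi]
    exact Fa_eq (le_trans (F_iter_le k i n) h)

lemma F_rec (k n : ℕ) : F k (n + 1) = (n + 1) - (F k)^[k] n := by
  show (n + 1) - (Fa k n)^[k] n = _
  rw [Fa_iter_eq (le_refl n) k]

lemma F_one (k : ℕ) : F k 1 = 1 := by
  rw [show (1:ℕ) = 0 + 1 from rfl, F_rec]
  simp [Function.iterate_fixed (F_zero k)]

lemma F_iter_one (k i : ℕ) : (F k)^[i] 1 = 1 :=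
  Function.iterate_fixed (F_one k) i

lemma F_lt {k n : ℕ} (h : 2 ≤ n) : F k n < n := by
  obtain ⟨m, rfl⟩ : ∃ m, n = m + 1 := ⟨n - 1, by omega⟩
  rw [F_rec]
  have h1 := F_iter_pos (k := k) (n := m) (by omega) k
  omega

end Fbasic

section Erep

/-- Canonical decomposition of `A k m - 1` : `{m-1, m-1-k, m-1-2k, ...}`. -/
def Erep (k : ℕ) : ℕ → Finset ℕ
  | 0 => ∅
  | m + 1 => if m + 1 ≤ k then {m} else insert m (Erep k (m + 1 - max k 1))
termination_by m => m
decreasing_by omega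

variable {k : ℕ} (hk : 1 ≤ k)

include hk in
lemma Erep_lt : ∀ m, ∀ p ∈ Erep k m, p + 1 ≤ m := by
  intro m
  induction m using Nat.strong_induction_on with
  | _ m ih =>
  match m with
  | 0 => simp [Erep]
  | m + 1 =>
    intro p hp
    rw [Erep] at hp
    split at hp
    · simp at hp; omega
    · rw [Finset.mem_insert] at hp
      rcases hp with rfl | hp
      · omega
      · have := ih (m + 1 - max k 1) (by omega) p hp
        omega

include hk in
lemma Erep_dist : ∀ m, ∀ p ∈ Erep k m, ∀ q ∈ Erep k m, p ≠ q → k ≤ Nat.dist p q := by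
  intro m
  induction m using Nat.strong_induction_on with
  | _ m ih =>
  match m with
  | 0 => simp [Erep]
  | m + 1 =>
    intro p hp q hq hne
    rw [Erep] at hp hq
    by_cases hc : m + 1 ≤ k
    · rw [if_pos hc] at hp hq
      simp at hp hq; simp_all
    · rw [if_neg hc] at hp hq
      rw [Finset.mem_insert] at hp hq
      have hmax : max k 1 = k := by omega
      rw [hmax] at hp hq
      have hdist : ∀ r, r ∈ Erep k (m + 1 - k) → r + 1 ≤ m + 1 - k :=
        Erep_lt hk _
      rcases hp with rfl | hp <;> rcases hq with rfl | hq
      · omega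
      · have := hdist q hq
        show k ≤ p - q + (q - p)
        omega
      · have := hdist p hp
        show k ≤ p - q + (q - p)
        omega
      · exact ih (m + 1 - k) (by omega) p hp q hq hne

include hk in
lemma Erep_sum : ∀ m, 1 ≤ m → (∑ p ∈ Erep k m, A k p) + 1 = A k m := by
  intro m
  induction m using Nat.strong_induction_on with
  | _ m ih =>
  match m with
  | 0 => omega
  | m + 1 =>
    intro _
    rw [Erep]
    split
    · rw [Finset.sum_singleton]
      rcases Nat.lt_or_ge (m + 1) k with h | h
      · rw [A_of_lt h, A_of_lt (by omega)]
      · have hm1 : m + 1 = k := by omega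
        rw [A_rec hk (by omega), A_of_lt (by omega), hm1]
        simp [A_zero]
    · have hmax : max k 1 = k := by omega
      rw [hmax]
      have hnm : m ∉ Erep k (m + 1 - k) := by
        intro hmem
        have := Erep_lt hk _ m hmem
        omega
      rw [Finset.sum_insert hnm]
      have hrec := ih (m + 1 - k) (by omega) (by omega)
      rw [A_rec hk (by omega)]
      omega

include hk in
lemma Erep_sum2 : ∀ m, 1 ≤ m →
    (∑ p ∈ Erep k m, A k (p - k)) + A k (m - 1) = A k m := by
  intro m
  induction m using Nat.strong_induction_on with
  | _ m ih =>
  match m with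
  | 0 => omega
  | m + 1 =>
    intro _
    rw [Erep]
    split
    · rw [Finset.sum_singleton]
      have hm : m - k = 0 := by omega
      rw [hm, A_zero]
      simp only [Nat.add_sub_cancel]
      rcases Nat.lt_or_ge (m + 1) k with h | h
      · rw [A_of_lt h, A_of_lt (by omega)]; omega
      · have hm1 : m + 1 = k := by omega
        rw [A_rec hk (by omega), hm1, show k - k = 0 by omega, A_zero]
        omega
    · have hmax : max k 1 = k := by omega
      rw [hmax]
      have hnm : m ∉ Erep k (m + 1 - k) := by
        intro hmem
        have := Erep_lt hk _ m hmem
        omega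
      rw [Finset.sum_insert hnm]
      have hrec := ih (m + 1 - k) (by omega) (by omega)
      have h1 : m + 1 - k - 1 = m - k := by omega
      rw [h1] at hrec
      rw [A_rec hk (by omega)]
      simp only [Nat.add_sub_cancel]
      omega

end Erep

section RunSum

variable {k : ℕ} (hk : 1 ≤ k)

include hk in
/-- `A (t*k - (j-1)) = 1 + Σ_{i<t} A ((i+1)*k - j)` for `1 ≤ j ≤ k`. -/
lemma run_sum {j : ℕ} (hj1 : 1 ≤ j) (hj : j ≤ k) (t : ℕ) :
    A k (t * k - (j - 1)) = 1 + ∑ i ∈ Finset.range t, A k ((i + 1) * k - j) := by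
  induction t with
  | zero =>
    rw [show 0 * k - (j - 1) = 0 by omega, A_zero]
    simp
  | succ t iht =>
    have hstep : A k ((t + 1) * k - (j - 1)) =
        A k (t * k - (j - 1)) + A k ((t + 1) * k - j) := by
      rcases Nat.eq_zero_or_pos t with rfl | ht
      · simp only [Nat.zero_mul, Nat.zero_sub, Nat.zero_add, one_mul, A_zero]
        rcases Nat.eq_or_lt_of_le hj1 with h | h
        · have e1 : k - (j - 1) = k := by omega
          have e2 : k - j = k - 1 := by omega
          have h2 := A_rec hk (p := k - 1) (by omega)
          rw [show k - 1 + 1 = k by omega, show k - k = 0 by omega, A_zero] at h2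
          rw [e1, e2, h2]
          omega
        · rw [A_of_lt (show k - (j - 1) < k by omega),
            A_of_lt (show k - j < k by omega)]
          omega
      · have hk' : k ≤ t * k := Nat.le_mul_of_pos_left k ht
        have hx : (t + 1) * k = t * k + k := by ring
        have h2 := A_rec hk (p := (t + 1) * k - j) (by omega)
        have e1 : (t + 1) * k - (j - 1) = (t + 1) * k - j + 1 := by omega
        have e2 : (t + 1) * k - j + 1 - k = t * k - (j - 1) := by omega
        rw [e1, h2, e2]
        omega
    rw [Finset.sum_range_succ, ← add_assoc, ← iht, hstep]

include hk in
/-- `A (p+1) = A p + A (p - (k-1))`. -/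
lemma A_succ_split (p : ℕ) : A k (p + 1) = A k p + A k (p - (k - 1)) := by
  rcases Nat.lt_or_ge p (k - 1) with h | h
  · rw [A_of_lt (by omega), A_of_lt (by omega), show p - (k-1) = 0 by omega, A_zero]
  · rw [A_rec hk (by omega), show p + 1 - k = p - (k - 1) by omega]

end RunSum

section Main

variable {k : ℕ}

theorem FG (hk : 1 ≤ k) (n : ℕ) :
    ∀ j ≤ k, ∀ D : Finset ℕ, IsCanonDecomp k n D →
      (F k)^[j] n = ∑ p ∈ D, A k (p - j) := by
  induction n using Nat.strong_induction_on with
  | _ n ih =>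
  intro j hj D hD
  obtain ⟨hdist, hsum⟩ := hD
  have hdist' : ∀ p ∈ D, ∀ q ∈ D, p ≠ q → k ≤ p - q + (q - p) :=
    fun p hp q hq h => hdist p hp q hq h
  rcases Nat.eq_zero_or_pos j with rfl | hj1
  · simpa using hsum.symm
  rcases Nat.eq_zero_or_pos n with rfl | hn1
  · have hD0 : D = ∅ := by
      rw [← Finset.not_nonempty_iff_eq_empty]
      rintro ⟨p, hp⟩
      have h1 : A k p ≤ ∑ q ∈ D, A k q :=
        Finset.single_le_sum (fun q _ => Nat.zero_le _) hp
      have := A_pos (k := k) p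
      omega
    subst hD0
    simp [Function.iterate_fixed (F_zero k)]
  have hne : D.Nonempty := by
    rw [Finset.nonempty_iff_ne_empty]
    rintro rfl
    simp at hsum
    omega
  set m := D.min' hne with hm
  have hmD : m ∈ D := D.min'_mem hne
  have hmin : ∀ p ∈ D, m ≤ p := fun p hp => D.min'_le p hp
  have hD'ge : ∀ p ∈ D.erase m, m + k ≤ p := by
    intro p hp
    have h1 := Finset.mem_of_mem_erase hp
    have h2 := Finset.ne_of_mem_erase hp
    have h3 := hdist' p h1 m hmD h2
    have h4 := hmin p h1
    omega
  have hsum' : A k m + ∑ p ∈ D.erase m, A k p = n := by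
    rw [Finset.add_sum_erase _ _ hmD, hsum]
  have hpt : ∑ p ∈ D.erase m, A k p
      = (∑ p ∈ D.erase m, A k (p - 1)) + ∑ p ∈ D.erase m, A k (p - k) := by
    rw [← Finset.sum_add_distrib]
    apply Finset.sum_congr rfl
    intro p hp
    have hp1 := hD'ge p hp
    have h5 := A_rec hk (p := p - 1) (by omega)
    rw [show p - 1 + 1 = p by omega] at h5
    exact h5
  have htar : ∑ p ∈ D, A k (p - 1)
      = A k (m - 1) + ∑ p ∈ D.erase m, A k (p - 1) :=
    (Finset.add_sum_erase D (fun p => A k (p - 1)) hmD).symm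
  -- Key step : the value of `F k n`.
  have key1 : F k n = ∑ p ∈ D, A k (p - 1) := by
    obtain ⟨n', hn'⟩ : ∃ n', n = n' + 1 := ⟨n - 1, by omega⟩
    have hrec : F k n = n - (F k)^[k] n' := by rw [hn', F_rec]
    rcases Nat.eq_zero_or_pos m with hm0 | hm1
    · -- minimal element is 0
      have hA0 : A k m = 1 := by rw [hm0]; exact A_zero
      have hdec : IsCanonDecomp k n' (D.erase m) := by
        refine ⟨fun p hp q hq h => hdist p (Finset.mem_of_mem_erase hp) q
          (Finset.mem_of_mem_erase hq) h, ?_⟩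
        omega
      have hIH := ih n' (by omega) k (le_refl k) _ hdec
      have hAm1 : A k (m - 1) = 1 := by rw [show m - 1 = 0 by omega]; exact A_zero
      have hle : (F k)^[k] n' ≤ n' := F_iter_le k k n'
      omega
    · -- minimal element is ≥ 1
      have hEl := Erep_lt hk m
      have hEd := Erep_dist hk m
      have hEs := Erep_sum hk m hm1
      have hEs2 := Erep_sum2 hk m hm1
      have hdisj : Disjoint (Erep k m) (D.erase m) := by
        rw [Finset.disjoint_left]
        intro p hp hp'
        have := hEl p hp
        have := hD'ge p hp'
        omega
      have hUdist : ∀ p ∈ Erep k m ∪ D.erase m, ∀ q ∈ Erep k m ∪ D.erase m,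
          p ≠ q → k ≤ Nat.dist p q := by
        intro p hp q hq hpq
        rw [Finset.mem_union] at hp hq
        show k ≤ p - q + (q - p)
        rcases hp with hp | hp <;> rcases hq with hq | hq
        · exact hEd p hp q hq hpq
        · have := hEl p hp; have := hD'ge q hq; omega
        · have := hEl q hq; have := hD'ge p hp; omega
        · exact hdist' p (Finset.mem_of_mem_erase hp) q (Finset.mem_of_mem_erase hq) hpq
      have hUsum : ∑ p ∈ Erep k m ∪ D.erase m, A k p
          = (∑ p ∈ Erep k m, A k p) + ∑ p ∈ D.erase m, A k p :=
        Finset.sum_union hdisj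
      have hdec : IsCanonDecomp k n' (Erep k m ∪ D.erase m) := ⟨hUdist, by omega⟩
      have hIH := ih n' (by omega) k (le_refl k) _ hdec
      have hUsum2 : ∑ p ∈ Erep k m ∪ D.erase m, A k (p - k)
          = (∑ p ∈ Erep k m, A k (p - k)) + ∑ p ∈ D.erase m, A k (p - k) :=
        Finset.sum_union hdisj
      have hle : (F k)^[k] n' ≤ n' := F_iter_le k k n'
      omega
  -- Now handle the iterate.
  obtain ⟨j', rfl⟩ : ∃ j', j = j' + 1 := ⟨j - 1, by omega⟩
  rcases Nat.eq_zero_or_pos j' with rfl | hj'1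
  · simpa using key1
  -- j ≥ 2 from here on
  rcases Nat.lt_or_ge n 2 with hn2 | hn2
  · -- n = 1 : D = {0}
    have hn1' : n = 1 := by omega
    have hm0 : m = 0 := by
      by_contra hm0
      have := two_le_A hk (p := m) (by omega)
      omega
    have hEe : D.erase m = ∅ := by
      rw [← Finset.not_nonempty_iff_eq_empty]
      rintro ⟨p, hp⟩
      have h1 : A k p ≤ ∑ q ∈ D.erase m, A k q :=
        Finset.single_le_sum (fun q _ => Nat.zero_le _) hp
      have h2 := A_pos (k := k) p
      have h3 := A_pos (k := k) m
      omega
    have htar2 : ∑ p ∈ D, A k (p - (j' + 1)) = A k (m - (j' + 1)) := by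
      rw [← Finset.add_sum_erase D (fun p => A k (p - (j' + 1))) hmD, hEe]
      simp
    rw [htar2, hn1', F_iter_one, show m - (j' + 1) = 0 by omega, A_zero]
  · -- n ≥ 2
    have hFlt : F k n < n := F_lt hn2
    rw [Function.iterate_succ_apply]
    rcases Nat.eq_zero_or_pos m with hm0 | hm1
    · -- min = 0 : renormalize with the maximal run 0, k, 2k, ..., t*k
      have hm0D : 0 ∈ D := hm0 ▸ hmD
      have hex : ∃ t, (t + 1) * k ∉ D := by
        refine ⟨n, fun hmem => ?_⟩
        have h1 : A k ((n + 1) * k) ≤ ∑ p ∈ D, A k p :=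
          Finset.single_le_sum (fun q _ => Nat.zero_le _) hmem
        have h2 : (n + 1) * k ≤ A k ((n + 1) * k) := (A_strictMono hk).le_apply
        have h3 : n + 1 ≤ (n + 1) * k := Nat.le_mul_of_pos_right _ (by omega)
        omega
      set t := Nat.find hex with htdef
      have ht1 : (t + 1) * k ∉ D := Nat.find_spec hex
      have hrun : ∀ i, i ≤ t → i * k ∈ D := by
        intro i hi
        match i with
        | 0 => simpa using hm0D
        | s + 1 =>
          have h1 := Nat.find_min hex (show s < t by omega)
          simpa using h1
      have hlow : D.filter (fun p => p ≤ t * k)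
          = (Finset.range (t + 1)).image (· * k) := by
        ext p
        simp only [Finset.mem_filter, Finset.mem_image, Finset.mem_range]
        constructor
        · rintro ⟨hpD, hple⟩
          have hdvd : k ∣ p := by
            by_contra hnd
            have hmod : p % k ≠ 0 := fun h => hnd (Nat.dvd_iff_mod_eq_zero.mpr h)
            have hdm := Nat.div_add_mod p k
            have hml : p % k < k := Nat.mod_lt p (by omega)
            set i := p / k with hidef
            have hcm : i * k = k * i := Nat.mul_comm i k
            have h1 : i * k < p := by omega
            have h2 : p < (i + 1) * k := by
              have : (i + 1) * k = i * k + k := by ring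
              omega
            have hilt : i < t := by
              by_contra hit
              have h3 : t * k ≤ i * k := Nat.mul_le_mul_right k (by omega)
              omega
            have hik : i * k ∈ D := hrun i (by omega)
            have h4 := hdist' p hpD (i * k) hik (by omega)
            omega
          obtain ⟨c, rfl⟩ := hdvd
          refine ⟨c, ?_, by ring⟩
          by_contra hct
          have h3 : (t + 1) * k ≤ c * k := Nat.mul_le_mul_right k (by omega)
          have h4 : c * k = k * c := Nat.mul_comm c k
          have h5 : (t + 1) * k = t * k + k := by ring
          omega
        · rintro ⟨i, hi, rfl⟩
          exact ⟨hrun i (by omega), Nat.mul_le_mul_right k (by omega)⟩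
      have hhigh : ∀ p ∈ D.filter (fun p => ¬ p ≤ t * k), t * k + k + 1 ≤ p := by
        intro p hp
        rw [Finset.mem_filter] at hp
        obtain ⟨hpD, hgt⟩ := hp
        have h1 := hdist' p hpD (t * k) (hrun t (le_refl t)) (by omega)
        have h2 : p ≠ (t + 1) * k := fun he => ht1 (he ▸ hpD)
        have h3 : (t + 1) * k = t * k + k := by ring
        omega
      set DH := D.filter (fun p => ¬ p ≤ t * k) with hDH
      have hinj : ∀ a ∈ DH, ∀ b ∈ DH, a - 1 = b - 1 → a = b := by
        intro a ha b hb hab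
        have := hhigh a ha
        have := hhigh b hb
        omega
      have hnotmem : t * k ∉ DH.image (· - 1) := by
        rw [Finset.mem_image]
        rintro ⟨p, hp, hpe⟩
        have := hhigh p hp
        omega
      have hlows : ∀ jj, 1 ≤ jj → jj ≤ k →
          ∑ p ∈ D.filter (fun p => p ≤ t * k), A k (p - jj)
            = A k (t * k - (jj - 1)) := by
        intro jj h1 h2
        rw [hlow, Finset.sum_image (fun a _ b _ hab =>
          Nat.eq_of_mul_eq_mul_right (show 0 < k by omega) hab)]
        rw [Finset.sum_range_succ']
        rw [show 0 * k - jj = 0 by omega, A_zero]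
        have h3 := run_sum hk h1 h2 t
        omega
      have hsplit1 : (∑ p ∈ D.filter (fun p => p ≤ t * k), A k (p - 1))
          + ∑ p ∈ DH, A k (p - 1) = ∑ p ∈ D, A k (p - 1) :=
        Finset.sum_filter_add_sum_filter_not D _ _
      have hkey1' : F k n = A k (t * k) + ∑ p ∈ DH, A k (p - 1) := by
        have h4 := hlows 1 (le_refl 1) hk
        rw [show t * k - (1 - 1) = t * k by omega] at h4
        omega
      have hEdist : ∀ p ∈ insert (t * k) (DH.image (· - 1)),
          ∀ q ∈ insert (t * k) (DH.image (· - 1)), p ≠ q → k ≤ Nat.dist p q := by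
        intro p hp q hq hpq
        rw [Finset.mem_insert, Finset.mem_image] at hp hq
        show k ≤ p - q + (q - p)
        rcases hp with rfl | ⟨a, ha, rfl⟩ <;> rcases hq with rfl | ⟨b, hb, rfl⟩
        · omega
        · have := hhigh b hb; omega
        · have := hhigh a ha; omega
        · have h1 := hhigh a ha
          have h2 := hhigh b hb
          have h3 : a ≠ b := by omega
          have h4 := hdist' a (Finset.mem_of_mem_filter a ha) b
            (Finset.mem_of_mem_filter b hb) h3
          omega
      have hsumE : ∑ p ∈ insert (t * k) (DH.image (· - 1)), A k p
          = A k (t * k) + ∑ p ∈ DH, A k (p - 1) := by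
        rw [Finset.sum_insert hnotmem, Finset.sum_image hinj]
      have hdec : IsCanonDecomp k (F k n) (insert (t * k) (DH.image (· - 1))) :=
        ⟨hEdist, by rw [hsumE, ← hkey1']⟩
      have hIH := ih (F k n) hFlt j' (by omega) _ hdec
      rw [hIH, Finset.sum_insert hnotmem, Finset.sum_image hinj]
      have hsplit2 : (∑ p ∈ D.filter (fun p => p ≤ t * k), A k (p - (j' + 1)))
          + ∑ p ∈ DH, A k (p - (j' + 1)) = ∑ p ∈ D, A k (p - (j' + 1)) :=
        Finset.sum_filter_add_sum_filter_not D _ _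
      have h5 := hlows (j' + 1) (by omega) hj
      rw [show t * k - (j' + 1 - 1) = t * k - j' by omega] at h5
      have h6 : ∑ p ∈ DH, A k (p - 1 - j') = ∑ p ∈ DH, A k (p - (j' + 1)) :=
        Finset.sum_congr rfl fun p _ => by rw [show p - 1 - j' = p - (j' + 1) by omega]
      omega
    · -- min ≥ 1 : shift the whole decomposition down by 1
      have hinj : ∀ a ∈ D, ∀ b ∈ D, a - 1 = b - 1 → a = b := by
        intro a ha b hb hab
        have := hmin a ha
        have := hmin b hb
        omega
      have hEdist : ∀ p ∈ D.image (· - 1), ∀ q ∈ D.image (· - 1),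
          p ≠ q → k ≤ Nat.dist p q := by
        intro p hp q hq hpq
        rw [Finset.mem_image] at hp hq
        obtain ⟨a, ha, rfl⟩ := hp
        obtain ⟨b, hb, rfl⟩ := hq
        have h3 : a ≠ b := by rintro rfl; exact hpq rfl
        have h4 := hdist' a ha b hb h3
        have := hmin a ha
        have := hmin b hb
        show k ≤ _ - _ + (_ - _)
        omega
      have hsumE : ∑ p ∈ D.image (· - 1), A k p = ∑ p ∈ D, A k (p - 1) :=
        Finset.sum_image hinj
      have hdec : IsCanonDecomp k (F k n) (D.image (· - 1)) :=
        ⟨hEdist, by rw [hsumE, ← key1]⟩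
      have hIH := ih (F k n) hFlt j' (by omega) _ hdec
      rw [hIH, Finset.sum_image hinj]
      exact Finset.sum_congr rfl fun p _ => by
        rw [show p - 1 - j' = p - (j' + 1) by omega]

end Main

section Lstep

variable {k : ℕ}

lemma L_step (hk : 1 ≤ k) {n : ℕ} {D : Finset ℕ} (hD : IsCanonDecomp k n D) :
    L k n = ∑ p ∈ D, A k (p + 1) ∧
      IsCanonDecomp k (L k n) (D.image (· + 1)) := by
  obtain ⟨hdist, hsum⟩ := hD
  have hF := FG hk n (k - 1) (by omega) D ⟨hdist, hsum⟩
  have hL : L k n = ∑ p ∈ D, A k (p + 1) := by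
    rw [L, hF, ← hsum, ← Finset.sum_add_distrib]
    exact Finset.sum_congr rfl fun p _ => (A_succ_split hk p).symm
  have hinj : ∀ a ∈ D, ∀ b ∈ D, a + 1 = b + 1 → a = b := by
    intro a _ b _ h; omega
  refine ⟨hL, ?_, ?_⟩
  · intro p hp q hq hpq
    rw [Finset.mem_image] at hp hq
    obtain ⟨a, ha, rfl⟩ := hp
    obtain ⟨b, hb, rfl⟩ := hq
    have h3 : a ≠ b := by omega
    have h4 : k ≤ a - b + (b - a) := hdist a ha b hb h3
    show k ≤ _ - _ + (_ - _)
    omega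
  · rw [Finset.sum_image hinj, hL]

end Lstep

theorem L_iterate_eq_shifted_decomp' (k : ℕ) (hk : 1 ≤ k) (n q : ℕ)
    (D : Finset ℕ) (hD : IsCanonDecomp k n D) :
    (L k)^[q] n = ∑ p ∈ D, A k (p + q) ∧
    IsCanonDecomp k ((L k)^[q] n) (D.image (· + q)) := by
  induction q with
  | zero =>
    have himg : D.image (· + 0) = D := by simp
    exact ⟨by simpa using hD.2.symm, by simpa [himg] using hD⟩
  | succ q ihq =>
    obtain ⟨h1, h2⟩ := ihq
    obtain ⟨h3, h4⟩ := L_step hk h2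
    have hinj : ∀ a ∈ D, ∀ b ∈ D, a + q = b + q → a = b := by
      intro a _ b _ h; omega
    have himg : (D.image (· + q)).image (· + 1) = D.image (· + (q + 1)) := by
      rw [Finset.image_image]
      exact Finset.image_congr fun p _ => by simp; omega
    constructor
    · rw [Function.iterate_succ_apply', h3, Finset.sum_image hinj]
      exact Finset.sum_congr rfl fun p _ => by rw [show p + q + 1 = p + (q + 1) by omega]
    · rw [Function.iterate_succ_apply']
      rw [← himg]
      exact h4

/-- `L_k^q n = Σ_{p ∈ D_k(n)} A_{k, p+q}`, and the canonical
`k`-decomposition of `L_k^q n` is `{p + q : p ∈ D_k(n)}`. -/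
theorem L_iterate_eq_shifted_decomp (k : ℕ) (hk : 1 ≤ k) (n q : ℕ)
    (D : Finset ℕ) (hD : IsCanonDecomp k n D) :
    (L k)^[q] n = ∑ p ∈ D, A k (p + q) ∧
    IsCanonDecomp k ((L k)^[q] n) (D.image (· + q)) := by
  exact L_iterate_eq_shifted_decomp' k hk n q D hD
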